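/- Let k ≥ 1 be an integer, M a finite multiset of nonnegative reals, and b ≥ 0 a real. Then Ψ̂_k(M ∪ {b}) ≤ (Ψ̂_k({b})^{1/k} + Ψ̂_k(M)^{1/k})^k, where M ∪ {b} is the multiset obtained by adjoining the element b to M and Ψ̂_k({b}) = k!·b^k. -/

import Mathlib

open Finset

/-- `hpoly k l` is the complete homogeneous symmetric polynomial of degree `k`
evaluated at the entries of the list `l`, i.e. the sum of all monomials of
total degree `k` in the elements of `l`. -/
noncomputable def hpoly : ℕ → List ℝ → ℝ
  | 0, _ => 1
  | _ + 1, [] => 0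
  | k + 1, a :: l => a * hpoly k (a :: l) + hpoly (k + 1) l
termination_by k l => (k, l.length)

/-- The `k`-order `Ψ̂`-function of a multiset `M` of reals:
`Ψ̂_k(M) = k! ·` (sum of all monomials of total degree `k` in the elements of `M`).
In particular `Ψ̂_0(M) = 1` and `Ψ̂_k(∅) = 0` for `k ≥ 1`. -/
noncomputable def psiHat (k : ℕ) (M : Multiset ℝ) : ℝ :=
  (Nat.factorial k : ℝ) * hpoly k M.toList

@[simp] lemma hpoly_zero (l : List ℝ) : hpoly 0 l = 1 := by simp [hpoly]
@[simp] lemma hpoly_nil (k : ℕ) : hpoly (k+1) [] = 0 := by simp [hpoly]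
lemma hpoly_cons (k : ℕ) (a : ℝ) (l : List ℝ) :
    hpoly (k+1) (a :: l) = a * hpoly k (a :: l) + hpoly (k+1) l := by
  rw [hpoly]

lemma hpoly_swap (k : ℕ) (a b : ℝ) (l : List ℝ) :
    hpoly k (a :: b :: l) = hpoly k (b :: a :: l) := by
  induction k using Nat.strong_induction_on with
  | _ k ih =>
    match k with
    | 0 => simp
    | 1 =>
      rw [hpoly_cons, hpoly_cons, hpoly_cons, hpoly_cons]
      simp; ring
    | k + 2 =>
      have ih1 : hpoly (k+1) (a :: b :: l) = hpoly (k+1) (b :: a :: l) :=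
        ih (k+1) (by omega)
      have ih0 : hpoly k (a :: b :: l) = hpoly k (b :: a :: l) :=
        ih k (by omega)
      have ha : hpoly (k+1) (a :: b :: l) = a * hpoly k (a :: b :: l) + hpoly (k+1) (b :: l) :=
        hpoly_cons k a (b :: l)
      have hb : hpoly (k+1) (b :: a :: l) = b * hpoly k (b :: a :: l) + hpoly (k+1) (a :: l) :=
        hpoly_cons k b (a :: l)
      have e1 : hpoly (k+2) (a :: b :: l)
          = a * hpoly (k+1) (a :: b :: l) + hpoly (k+2) (b :: l) := hpoly_cons (k+1) a (b :: l)
      have e2 : hpoly (k+2) (b :: a :: l)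
          = b * hpoly (k+1) (b :: a :: l) + hpoly (k+2) (a :: l) := hpoly_cons (k+1) b (a :: l)
      have e3 : hpoly (k+2) (b :: l) = b * hpoly (k+1) (b :: l) + hpoly (k+2) l :=
        hpoly_cons (k+1) b l
      have e4 : hpoly (k+2) (a :: l) = a * hpoly (k+1) (a :: l) + hpoly (k+2) l :=
        hpoly_cons (k+1) a l
      rw [e1, e2, e3, e4]
      rw [ih0] at ha
      linear_combination (a + b) * ih1 + a * hb - b * ha

lemma hpoly_perm (k : ℕ) {l l' : List ℝ} (h : l.Perm l') : hpoly k l = hpoly k l' := by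
  induction h generalizing k with
  | nil => rfl
  | cons x h ih =>
    induction k using Nat.strong_induction_on with
    | _ k ihk =>
      match k with
      | 0 => simp
      | k + 1 =>
        rw [hpoly_cons, hpoly_cons, ihk k (by omega), ih]
  | swap x y l => exact hpoly_swap k y x l
  | trans h1 h2 ih1 ih2 => rw [ih1, ih2]

lemma hpoly_nonneg : ∀ (k : ℕ) (l : List ℝ), (∀ x ∈ l, (0:ℝ) ≤ x) → 0 ≤ hpoly k l
  | 0, l, _ => by simp
  | k+1, [], _ => by simp
  | k+1, a :: l, hl => by
    rw [hpoly_cons]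
    have h1 := hpoly_nonneg k (a::l) hl
    have h2 := hpoly_nonneg (k+1) l (fun x hx => hl x (by simp [hx]))
    have ha := hl a (by simp)
    positivity
termination_by k l => (k, l.length)

lemma hpoly_expand (b : ℝ) (l : List ℝ) (n : ℕ) :
    hpoly n (b :: l) = ∑ i ∈ range (n+1), b ^ i * hpoly (n - i) l := by
  induction n with
  | zero => simp
  | succ n ihn =>
    rw [hpoly_cons, ihn, Finset.mul_sum,
      Finset.sum_range_succ' (fun i => b ^ i * hpoly (n + 1 - i) l) (n+1)]
    simp only [Nat.succ_sub_succ, pow_succ, pow_zero, one_mul, Nat.sub_zero]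
    have : ∀ i ∈ range (n+1), b * (b ^ i * hpoly (n - i) l) = b ^ i * b * hpoly (n - i) l :=
      fun i _ => by ring
    rw [Finset.sum_congr rfl this]

lemma hpoly_singleton (b : ℝ) (n : ℕ) : hpoly n [b] = b ^ n := by
  induction n with
  | zero => simp
  | succ n ihn => rw [hpoly_cons, ihn, hpoly_nil, pow_succ]; ring

/-! ### Combinatorial sum identities -/

lemma pascal_sum (n : ℕ) (G : ℕ → ℝ) :
    ∑ u ∈ range (n+2), ((n+1).choose u : ℝ) * G u
      = ∑ u ∈ range (n+1), (n.choose u : ℝ) * G u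
        + ∑ u ∈ range (n+1), (n.choose u : ℝ) * G (u+1) := by
  rw [Finset.sum_range_succ' (fun u => ((n+1).choose u : ℝ) * G u) (n+1)]
  have e1 : ∀ u ∈ range (n+1), ((n+1).choose (u+1) : ℝ) * G (u+1)
      = (n.choose u : ℝ) * G (u+1) + (n.choose (u+1) : ℝ) * G (u+1) := by
    intro u _
    rw [Nat.choose_succ_succ]; push_cast; ring
  rw [Finset.sum_congr rfl e1, Finset.sum_add_distrib]
  have e2 : ∑ u ∈ range (n+1), (n.choose (u+1) : ℝ) * G (u+1)
      = ∑ u ∈ range (n+2), (n.choose u : ℝ) * G u - (n.choose 0 : ℝ) * G 0 := by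
    rw [Finset.sum_range_succ' (fun u => (n.choose u : ℝ) * G u) (n+1)]
    ring
  rw [e2, Finset.sum_range_succ (fun u => (n.choose u : ℝ) * G u) (n+1)]
  simp [Nat.choose_succ_self]
  ring

lemma choose_double_sum (q : ℕ) : ∀ (p : ℕ) (F : ℕ → ℝ),
    ∑ i ∈ range (p+1), ∑ j ∈ range (q+1), (p.choose i : ℝ) * (q.choose j : ℝ) * F (i+j)
      = ∑ u ∈ range (p+q+1), ((p+q).choose u : ℝ) * F u := by
  intro p
  induction p with
  | zero => intro F; simp
  | succ p ih =>
    intro F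
    have inner : ∀ (r : ℕ) (i : ℕ), ∑ j ∈ range (q+1), (r : ℝ) * (q.choose j : ℝ) * F (i+j)
        = (r:ℝ) * ∑ j ∈ range (q+1), (q.choose j : ℝ) * F (i+j) := by
      intro r i; rw [Finset.mul_sum]; exact Finset.sum_congr rfl fun j _ => by ring
    calc ∑ i ∈ range (p+2), ∑ j ∈ range (q+1), ((p+1).choose i : ℝ) * (q.choose j : ℝ) * F (i+j)
        = ∑ i ∈ range (p+2), ((p+1).choose i : ℝ)
            * ∑ j ∈ range (q+1), (q.choose j : ℝ) * F (i+j) := by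
          exact Finset.sum_congr rfl fun i _ => inner _ i
      _ = ∑ i ∈ range (p+1), (p.choose i : ℝ) * ∑ j ∈ range (q+1), (q.choose j:ℝ) * F (i+j)
          + ∑ i ∈ range (p+1), (p.choose i : ℝ) * ∑ j ∈ range (q+1), (q.choose j:ℝ) * F (i+1+j) :=
          pascal_sum p (fun i => ∑ j ∈ range (q+1), (q.choose j : ℝ) * F (i+j))
      _ = ∑ u ∈ range (p+q+1), ((p+q).choose u : ℝ) * F u
          + ∑ u ∈ range (p+q+1), ((p+q).choose u : ℝ) * F (u+1) := by
          rw [← ih F, ← ih (fun u => F (u+1))]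
          congr 1
          · exact Finset.sum_congr rfl fun i _ => by rw [← inner]
          · refine Finset.sum_congr rfl fun i _ => ?_
            rw [← inner]
            exact Finset.sum_congr rfl fun j _ => by rw [show i+1+j = i+j+1 by omega]
      _ = ∑ u ∈ range (p+q+2), ((p+q+1).choose u : ℝ) * F u := (pascal_sum (p+q) F).symm
      _ = ∑ u ∈ range (p+1+q+1), ((p+1+q).choose u : ℝ) * F u := by
          rw [show p+q+2 = p+1+q+1 by omega, show p+q+1 = p+1+q by omega]

lemma sum_choose_mul_choose (i j N : ℕ) (hj : j ≤ N) :
    ∑ k ∈ range (N+1), i.choose k * j.choose k = (i+j).choose j := by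
  have h1 : ∑ k ∈ range (N+1), i.choose k * j.choose k
      = ∑ k ∈ range (j+1), i.choose k * j.choose k := by
    refine (Finset.sum_subset (by intro x hx; simp only [Finset.mem_range] at hx ⊢; omega) ?_).symm
    intro k _ hk
    simp only [Finset.mem_range, not_lt] at hk
    rw [Nat.choose_eq_zero_of_lt (show j < k by omega), Nat.mul_zero]
  rw [h1, Nat.add_choose_eq, Finset.Nat.sum_antidiagonal_eq_sum_range_succ_mk]
  refine Finset.sum_congr rfl fun k hk => ?_
  rw [Finset.mem_range] at hk
  rw [← Nat.choose_symm (show k ≤ j by omega)]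

lemma sum_succ_choose_mul_choose (i j N : ℕ) (hj : j ≤ N) :
    ∑ k ∈ range (N+1), (k+1) * ((i+1).choose (k+1) * (j+1).choose (k+1))
      = (i+1) * (i+j+1).choose j := by
  have e1 : ∀ k, (k+1) * ((i+1).choose (k+1) * (j+1).choose (k+1))
      = (i+1) * (i.choose k * (j+1).choose (k+1)) := by
    intro k
    have h := Nat.add_one_mul_choose_eq i k
    calc (k+1) * ((i+1).choose (k+1) * (j+1).choose (k+1))
        = ((i+1).choose (k+1) * (k+1)) * (j+1).choose (k+1) := by ring
      _ = (Nat.succ i * i.choose k) * (j+1).choose (k+1) := by rw [← h]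
      _ = (i+1) * (i.choose k * (j+1).choose (k+1)) := by rw [Nat.succ_eq_add_one]; ring
  simp only [e1]
  rw [← Finset.mul_sum]
  congr 1
  have h1 : ∑ k ∈ range (N+1), i.choose k * (j+1).choose (k+1)
      = ∑ k ∈ range (j+1), i.choose k * (j+1).choose (k+1) := by
    refine (Finset.sum_subset (by intro x hx; simp only [Finset.mem_range] at hx ⊢; omega) ?_).symm
    intro k _ hk
    simp only [Finset.mem_range, not_lt] at hk
    rw [Nat.choose_eq_zero_of_lt (show j+1 < k+1 by omega), Nat.mul_zero]
  rw [h1, show i+j+1 = i+(j+1) by omega, Nat.add_choose_eq,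
    Finset.Nat.sum_antidiagonal_eq_sum_range_succ_mk]
  refine Finset.sum_congr rfl fun k hk => ?_
  rw [Finset.mem_range] at hk
  have : (j+1) - (k+1) = j - k := by omega
  rw [← Nat.choose_symm (show k+1 ≤ j+1 by omega), this]

/-! ### Gram representations of Hankel-type kernels -/

noncomputable def bconv (m a : ℕ → ℝ) (n : ℕ) : ℝ :=
  ∑ i ∈ range (n+1), (n.choose i : ℝ) * m i * a (n - i)

def HG (a : ℕ → ℝ) : Prop :=
  ∀ N : ℕ, ∃ (ι : Type) (s : Finset ι) (w : ι → ℝ) (g : ℕ → ι → ℝ),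
    (∀ k ∈ s, 0 ≤ w k) ∧ ∀ i ≤ N, ∀ j ≤ N, a (i + j) = ∑ k ∈ s, w k * g i k * g j k

lemma HG_bconv {m a : ℕ → ℝ} (hm : HG m) (ha : HG a) : HG (bconv m a) := by
  intro N
  obtain ⟨ι₁, s₁, w₁, φ, hw₁, hφ⟩ := hm N
  obtain ⟨ι₂, s₂, w₂, ψ, hw₂, hψ⟩ := ha N
  refine ⟨ι₁ × ι₂, s₁ ×ˢ s₂, fun x => w₁ x.1 * w₂ x.2,
    fun p x => ∑ i ∈ range (p+1), (p.choose i : ℝ) * φ i x.1 * ψ (p-i) x.2, ?_, ?_⟩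
  · rintro ⟨k,l⟩ hx
    rw [Finset.mem_product] at hx
    exact mul_nonneg (hw₁ _ hx.1) (hw₂ _ hx.2)
  intro p hp q hq
  have main : bconv m a (p+q)
      = ∑ i ∈ range (p+1), ∑ j ∈ range (q+1), (p.choose i : ℝ) * (q.choose j : ℝ)
          * (m (i+j) * a ((p-i)+(q-j))) := by
    rw [bconv]
    have e : ∀ u ∈ range (p+q+1), ((p+q).choose u : ℝ) * m u * a (p+q-u)
        = ((p+q).choose u : ℝ) * (m u * a (p+q-u)) := fun u _ => by ring
    rw [Finset.sum_congr rfl e, ← choose_double_sum q p (fun u => m u * a (p+q-u))]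
    refine Finset.sum_congr rfl fun i hi => Finset.sum_congr rfl fun j hj => ?_
    rw [Finset.mem_range] at hi hj
    rw [show p+q-(i+j) = (p-i)+(q-j) by omega]
  rw [main]
  have rhs : ∑ x ∈ s₁ ×ˢ s₂, (fun x => w₁ x.1 * w₂ x.2) x
        * (∑ i ∈ range (p+1), (p.choose i : ℝ) * φ i x.1 * ψ (p-i) x.2)
        * (∑ j ∈ range (q+1), (q.choose j : ℝ) * φ j x.1 * ψ (q-j) x.2)
      = ∑ i ∈ range (p+1), ∑ j ∈ range (q+1), (p.choose i : ℝ) * (q.choose j : ℝ)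
          * (m (i+j) * a ((p-i)+(q-j))) := by
    have step1 : ∀ x ∈ s₁ ×ˢ s₂, (w₁ x.1 * w₂ x.2)
          * (∑ i ∈ range (p+1), (p.choose i : ℝ) * φ i x.1 * ψ (p-i) x.2)
          * (∑ j ∈ range (q+1), (q.choose j : ℝ) * φ j x.1 * ψ (q-j) x.2)
        = ∑ i ∈ range (p+1), ∑ j ∈ range (q+1),
            ((p.choose i : ℝ) * (q.choose j : ℝ))
              * ((w₁ x.1 * φ i x.1 * φ j x.1) * (w₂ x.2 * ψ (p-i) x.2 * ψ (q-j) x.2)) := by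
      intro x _
      rw [mul_assoc, Finset.sum_mul_sum, Finset.mul_sum]
      refine Finset.sum_congr rfl fun i _ => ?_
      rw [Finset.mul_sum]
      exact Finset.sum_congr rfl fun j _ => by ring
    rw [Finset.sum_congr rfl step1]
    rw [Finset.sum_comm]
    refine Finset.sum_congr rfl fun i hi => ?_
    rw [Finset.sum_comm]
    refine Finset.sum_congr rfl fun j hj => ?_
    rw [Finset.mem_range] at hi hj
    have : ∑ x ∈ s₁ ×ˢ s₂, ((p.choose i : ℝ) * (q.choose j : ℝ))
              * ((w₁ x.1 * φ i x.1 * φ j x.1) * (w₂ x.2 * ψ (p-i) x.2 * ψ (q-j) x.2))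
        = ((p.choose i : ℝ) * (q.choose j : ℝ)) *
            ((∑ k ∈ s₁, w₁ k * φ i k * φ j k) * (∑ l ∈ s₂, w₂ l * ψ (p-i) l * ψ (q-j) l)) := by
      rw [Finset.sum_mul_sum, ← Finset.mul_sum, Finset.sum_product]
    rw [this, ← hφ i (by omega) j (by omega), ← hψ (p-i) (by omega) (q-j) (by omega)]
  exact rhs.symm

lemma HG_fact (b : ℝ) : HG (fun n => (n.factorial : ℝ) * b ^ n) := by
  intro N
  refine ⟨ℕ, range (N+1), fun _ => 1, fun i k => (i.factorial : ℝ) * (i.choose k : ℝ) * b ^ i,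
    fun _ _ => zero_le_one, ?_⟩
  intro i hi j hj
  simp only
  have key : ((i+j).factorial : ℝ) * b ^ (i+j)
      = (∑ k ∈ range (N+1), ((i.choose k : ℝ) * (j.choose k : ℝ)))
        * ((i.factorial : ℝ) * (j.factorial : ℝ) * b ^ (i+j)) := by
    have hs : ∑ k ∈ range (N+1), ((i.choose k : ℝ) * (j.choose k : ℝ))
        = (((i+j).choose j : ℕ) : ℝ) := by
      rw [← sum_choose_mul_choose i j N hj]; push_cast; rfl
    rw [hs]
    have := Nat.choose_mul_factorial_mul_factorial (show j ≤ i + j by omega)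
    have e : i + j - j = i := by omega
    rw [e] at this
    rw [← this]; push_cast; ring
  rw [key, Finset.sum_mul]
  refine Finset.sum_congr rfl fun k _ => ?_
  rw [pow_add]; ring

lemma HG_fact_shift (b : ℝ) (hb : 0 ≤ b) :
    HG (fun n => ((n+1).factorial : ℝ) * b ^ (n+1)) := by
  intro N
  refine ⟨ℕ, range (N+1), fun k => (k+1 : ℝ),
    fun i k => (i.factorial : ℝ) * ((i+1).choose (k+1) : ℝ) * b ^ i * Real.sqrt b,
    fun k _ => by positivity, ?_⟩
  intro i hi j hj
  simp only
  have sq : Real.sqrt b * Real.sqrt b = b := Real.mul_self_sqrt hb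
  have key : (((i+j)+1).factorial : ℝ) * b ^ ((i+j)+1)
      = (∑ k ∈ range (N+1), ((k+1 : ℝ) * (((i+1).choose (k+1) : ℝ) * ((j+1).choose (k+1) : ℝ))))
        * ((i.factorial : ℝ) * (j.factorial : ℝ) * b ^ (i+j) * b) := by
    have hs : ∑ k ∈ range (N+1), ((k+1 : ℝ) * (((i+1).choose (k+1) : ℝ) * ((j+1).choose (k+1) : ℝ)))
        = (((i+1) * (i+j+1).choose j : ℕ) : ℝ) := by
      rw [← sum_succ_choose_mul_choose i j N hj]; push_cast; rfl
    rw [hs]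
    have h2 := Nat.choose_mul_factorial_mul_factorial (show j ≤ i + j + 1 by omega)
    have e : i + j + 1 - j = i + 1 := by omega
    rw [e] at h2
    have : (((i+j+1).factorial : ℕ) : ℝ)
        = (((i+j+1).choose j : ℕ) : ℝ) * (j.factorial : ℝ) * ((i+1).factorial : ℝ) := by
      rw [← h2]; push_cast; ring
    rw [show (i+j)+1 = i+j+1 from rfl, this]
    have hfact : ((i+1).factorial : ℝ) = (i+1 : ℝ) * (i.factorial : ℝ) := by
      rw [Nat.factorial_succ]; push_cast; ring
    rw [hfact]
    push_cast
    ring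
  rw [key, Finset.sum_mul]
  refine Finset.sum_congr rfl fun k _ => ?_
  rw [pow_add]
  ring_nf
  rw [Real.sq_sqrt hb]
  ring

lemma HG_delta : HG (fun n => if n = 0 then (1:ℝ) else 0) := by
  intro N
  refine ⟨ℕ, {0}, fun _ => 1, fun i _ => if i = 0 then 1 else 0, fun _ _ => zero_le_one, ?_⟩
  intro i _ j _
  simp only [Finset.sum_singleton]
  rcases i with _|i <;> rcases j with _|j <;> simp

lemma HG_zero : HG (fun _ => (0:ℝ)) := by
  intro N
  exact ⟨ℕ, ∅, fun _ => 0, fun _ _ => 0, by simp, by simp⟩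

lemma HG_add {a a' : ℕ → ℝ} (h : HG a) (h' : HG a') : HG (fun n => a n + a' n) := by
  intro N
  obtain ⟨ι, s, w, g, hw, hg⟩ := h N
  obtain ⟨ι', s', w', g', hw', hg'⟩ := h' N
  refine ⟨ι ⊕ ι', s.disjSum s', Sum.elim w w',
    fun i => Sum.elim (g i) (g' i), ?_, ?_⟩
  · intro k hk
    rcases k with k | k
    · exact hw k (by simpa using (Finset.inl_mem_disjSum.mp hk))
    · exact hw' k (by simpa using (Finset.inr_mem_disjSum.mp hk))
  · intro i hi j hj
    rw [Finset.sum_disjSum]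
    simp only [Sum.elim_inl, Sum.elim_inr]
    rw [← hg i hi j hj, ← hg' i hi j hj]

lemma bconv_succ (m a : ℕ → ℝ) (n : ℕ) :
    bconv m a (n+1)
      = bconv m (fun t => a (t+1)) n + bconv (fun t => m (t+1)) a n := by
  have h1 : bconv m a (n+1)
      = ∑ u ∈ range (n+2), ((n+1).choose u : ℝ) * (m u * a (n+1-u)) := by
    rw [bconv]
    exact Finset.sum_congr rfl fun u _ => by ring
  rw [h1, pascal_sum n (fun u => m u * a (n+1-u))]
  congr 1
  · rw [bconv]
    refine Finset.sum_congr rfl fun u hu => ?_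
    rw [Finset.mem_range] at hu
    rw [show n+1-u = n-u+1 by omega]
    ring
  · rw [bconv]
    refine Finset.sum_congr rfl fun u hu => ?_
    rw [Finset.mem_range] at hu
    rw [show n+1-(u+1) = n-u by omega]
    ring

lemma HG_cs {a : ℕ → ℝ} (h : HG a) (p q : ℕ) :
    a (p+q) ^ 2 ≤ a (p+p) * a (q+q) := by
  obtain ⟨ι, s, w, g, hw, hg⟩ := h (max p q)
  have hp : p ≤ max p q := le_max_left _ _
  have hq : q ≤ max p q := le_max_right _ _
  rw [hg p hp q hq, hg p hp p hp, hg q hq q hq]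
  refine Finset.sum_sq_le_sum_mul_sum_of_sq_eq_mul s ?_ ?_ ?_
  · intro k hk; have := hw k hk; nlinarith [sq_nonneg (g p k)]
  · intro k hk; have := hw k hk; nlinarith [sq_nonneg (g q k)]
  · intro k hk; ring

lemma log_convex_of_HG {a : ℕ → ℝ} (h : HG a) (hs : HG (fun n => a (n+1)))
    (n : ℕ) (hn : 1 ≤ n) : a n ^ 2 ≤ a (n-1) * a (n+1) := by
  rcases Nat.even_or_odd n with ⟨t, ht⟩ | ⟨t, ht⟩
  · have ht1 : 1 ≤ t := by omega
    have := HG_cs hs (t-1) t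
    rw [show t-1+t = n-1 by omega, show t-1+(t-1)+1 = n-1 by omega,
      show t+t+1 = n+1 by omega] at this
    calc a n ^2 = a (n-1+1) ^ 2 := by rw [show n-1+1 = n by omega]
      _ ≤ a (n-1) * a (n+1) := this
  · have := HG_cs h t (t+1)
    rw [show t+(t+1) = n from by omega, show t+t = n-1 by omega,
      show t+1+(t+1) = n+1 by omega] at this
    exact this

lemma lyapunov {a : ℕ → ℝ} (h0 : a 0 = 1) (hpos : ∀ n, 0 ≤ a n)
    (hlc : ∀ n, 1 ≤ n → a n ^ 2 ≤ a (n-1) * a (n+1)) :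
    ∀ k j, j ≤ k → a j ^ k ≤ a k ^ j := by
  have T : ∀ k, a k ^ (k+1) ≤ a (k+1) ^ k := by
    intro k
    induction k with
    | zero => simp [h0]
    | succ k ihk =>
      rcases eq_or_lt_of_le (hpos (k+1)) with hz | hpos1
      · rw [← hz, zero_pow (show k+1+1 ≠ 0 by omega)]
        exact pow_nonneg (hpos _) _
      · have lc := hlc (k+1) (by omega)
        simp only [Nat.add_sub_cancel] at lc
        have step1 : a (k+1) ^ (2*(k+1)) ≤ a k ^ (k+1) * a (k+2) ^ (k+1) := by
          calc a (k+1) ^ (2*(k+1)) = (a (k+1) ^ 2) ^ (k+1) := by rw [← pow_mul]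
            _ ≤ (a k * a (k+2)) ^ (k+1) := by
                exact pow_le_pow_left₀ (sq_nonneg _) lc (k+1)
            _ = a k ^ (k+1) * a (k+2) ^ (k+1) := mul_pow _ _ _
        have step2 : a k ^ (k+1) * a (k+2) ^ (k+1) ≤ a (k+1) ^ k * a (k+2) ^ (k+1) :=
          mul_le_mul_of_nonneg_right ihk (pow_nonneg (hpos _) _)
        have key : a (k+1) ^ (k+2) * a (k+1) ^ k ≤ a (k+2) ^ (k+1) * a (k+1) ^ k := by
          calc a (k+1) ^ (k+2) * a (k+1) ^ k = a (k+1) ^ (2*(k+1)) := by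
                rw [← pow_add]; congr 1; omega
            _ ≤ a (k+1) ^ k * a (k+2) ^ (k+1) := le_trans step1 step2
            _ = a (k+2) ^ (k+1) * a (k+1) ^ k := by ring
        exact le_of_mul_le_mul_right key (pow_pos hpos1 k)
  intro k j hjk
  induction k with
  | zero => interval_cases j; simp
  | succ k ihk =>
    rcases Nat.lt_or_ge j (k+1) with hlt | hge
    · have hjk' : j ≤ k := by omega
      have ih := ihk hjk'
      rcases Nat.eq_zero_or_pos k with hk0 | hk0
      · subst hk0; interval_cases j; simp [h0]
      · have e1 : (a j ^ (k+1)) ^ k ≤ (a (k+1) ^ j) ^ k := by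
          calc (a j ^ (k+1)) ^ k = (a j ^ k) ^ (k+1) := by rw [← pow_mul, ← pow_mul]; ring_nf
            _ ≤ (a k ^ j) ^ (k+1) := pow_le_pow_left₀ (pow_nonneg (hpos _) _) ih (k+1)
            _ = (a k ^ (k+1)) ^ j := by rw [← pow_mul, ← pow_mul]; ring_nf
            _ ≤ (a (k+1) ^ k) ^ j := pow_le_pow_left₀ (pow_nonneg (hpos _) _) (T k) j
            _ = (a (k+1) ^ j) ^ k := by rw [← pow_mul, ← pow_mul]; ring_nf
        exact (pow_le_pow_iff_left₀ (pow_nonneg (hpos _) _) (pow_nonneg (hpos _) _)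
          (by omega)).mp e1
    · have : j = k+1 := by omega
      subst this
      exact le_refl _

/-! ### The moment sequence of a list -/

noncomputable def ASeq (l : List ℝ) (n : ℕ) : ℝ := (n.factorial : ℝ) * hpoly n l

lemma ASeq_cons (b : ℝ) (l : List ℝ) (n : ℕ) :
    ASeq (b :: l) n = bconv (fun i => (i.factorial : ℝ) * b ^ i) (ASeq l) n := by
  rw [ASeq, hpoly_expand, Finset.mul_sum, bconv]
  refine Finset.sum_congr rfl fun i hi => ?_
  rw [Finset.mem_range] at hi
  have h := Nat.choose_mul_factorial_mul_factorial (show i ≤ n by omega)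
  have : ((n.factorial : ℕ) : ℝ)
      = ((n.choose i : ℕ) : ℝ) * (i.factorial : ℝ) * ((n-i).factorial : ℝ) := by
    rw [← h]; push_cast; ring
  rw [ASeq, this]
  ring

lemma HG_ASeq : ∀ (l : List ℝ), (∀ x ∈ l, (0:ℝ) ≤ x) →
    HG (ASeq l) ∧ HG (fun n => ASeq l (n+1)) := by
  intro l
  induction l with
  | nil =>
    intro _
    constructor
    · have e : ASeq [] = fun n => if n = 0 then (1:ℝ) else 0 := by
        funext n; rcases n with _|n <;> simp [ASeq]
      rw [e]; exact HG_delta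
    · have e : (fun n => ASeq [] (n+1)) = fun _ => (0:ℝ) := by
        funext n; simp [ASeq]
      rw [e]; exact HG_zero
  | cons b l ih =>
    intro hl
    have hb : (0:ℝ) ≤ b := hl b (by simp)
    have hl' : ∀ x ∈ l, (0:ℝ) ≤ x := fun x hx => hl x (by simp [hx])
    obtain ⟨ih1, ih2⟩ := ih hl'
    have e : ASeq (b :: l) = bconv (fun i => (i.factorial : ℝ) * b ^ i) (ASeq l) :=
      funext (ASeq_cons b l)
    constructor
    · rw [e]; exact HG_bconv (HG_fact b) ih1
    · rw [e]
      have e2 : (fun n => bconv (fun i => (i.factorial : ℝ) * b ^ i) (ASeq l) (n+1))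
          = fun n => bconv (fun i => (i.factorial : ℝ) * b ^ i) (fun t => ASeq l (t+1)) n
            + bconv (fun t => ((t+1).factorial : ℝ) * b ^ (t+1)) (ASeq l) n := by
        funext n
        exact bconv_succ _ _ n
      rw [e2]
      exact HG_add (HG_bconv (HG_fact b) ih2) (HG_bconv (HG_fact_shift b hb) ih1)

lemma ASeq_nonneg {l : List ℝ} (hl : ∀ x ∈ l, (0:ℝ) ≤ x) (n : ℕ) : 0 ≤ ASeq l n := by
  have := hpoly_nonneg n l hl
  have : (0:ℝ) ≤ (n.factorial : ℝ) := Nat.cast_nonneg _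
  unfold ASeq
  positivity

lemma ASeq_lyapunov {l : List ℝ} (hl : ∀ x ∈ l, (0:ℝ) ≤ x) {j k : ℕ} (hjk : j ≤ k) :
    ASeq l j ^ k ≤ ASeq l k ^ j := by
  obtain ⟨h1, h2⟩ := HG_ASeq l hl
  refine lyapunov ?_ (ASeq_nonneg hl) (fun n hn => log_convex_of_HG h1 h2 n hn) k j hjk
  simp [ASeq]

/-! ### Main theorem -/

lemma rpow_bound {C : ℝ} (hC : 0 ≤ C) {k : ℕ} (hk : k ≠ 0) {j : ℕ} {c : ℝ}
    (hc : 0 ≤ c) (h : c ^ k ≤ C ^ j) : c ≤ (C ^ (1/(k:ℝ))) ^ j := by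
  have hkR : ((k:ℝ)) ≠ 0 := Nat.cast_ne_zero.mpr hk
  have base : (0:ℝ) ≤ C ^ (1/(k:ℝ)) := Real.rpow_nonneg hC _
  have key : ((C ^ (1/(k:ℝ))) ^ j) ^ k = C ^ j := by
    rw [← Real.rpow_natCast (C ^ (1/(k:ℝ))) j, ← Real.rpow_mul hC,
      ← Real.rpow_natCast (C ^ (1/(k:ℝ) * (j:ℝ))) k, ← Real.rpow_mul hC]
    rw [show 1/(k:ℝ) * (j:ℝ) * (k:ℝ) = (j:ℝ) by field_simp]
    exact Real.rpow_natCast C j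
  have h2 : c ^ k ≤ ((C ^ (1/(k:ℝ))) ^ j) ^ k := by rw [key]; exact h
  exact (pow_le_pow_iff_left₀ hc (pow_nonneg base _) hk).mp h2

/-- Lemma 1(c): for `k ≥ 1`, a finite multiset `M` of nonnegative reals and `b ≥ 0`,
`Ψ̂_k(M ∪ {b}) ≤ (Ψ̂_k({b})^{1/k} + Ψ̂_k(M)^{1/k})^k`. -/
theorem psiHat_cons_le (k : ℕ) (hk : 1 ≤ k) (M : Multiset ℝ) (hM : ∀ x ∈ M, (0:ℝ) ≤ x)
    (b : ℝ) (hb : 0 ≤ b) :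
    psiHat k (b ::ₘ M) ≤
      (psiHat k ({b} : Multiset ℝ) ^ (1 / (k : ℝ)) + psiHat k M ^ (1 / (k : ℝ))) ^ k := by
  have hMl : ∀ x ∈ M.toList, (0:ℝ) ≤ x := by
    intro x hx; exact hM x (by rwa [← Multiset.mem_toList])
  -- rewrite LHS
  have hperm : ((b ::ₘ M).toList).Perm (b :: M.toList) := by
    rw [← Multiset.coe_eq_coe, Multiset.coe_toList, ← Multiset.cons_coe, Multiset.coe_toList]
  have hL : psiHat k (b ::ₘ M) = ASeq (b :: M.toList) k := by
    rw [psiHat, ASeq, hpoly_perm k hperm]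
  -- singleton
  have hA : psiHat k ({b} : Multiset ℝ) = ASeq [b] k := by
    rw [psiHat, ASeq, Multiset.toList_singleton]
  have hB : psiHat k M = ASeq M.toList k := by rw [psiHat, ASeq]
  set X : ℝ := psiHat k ({b} : Multiset ℝ) ^ (1/(k:ℝ)) with hX
  set Y : ℝ := psiHat k M ^ (1/(k:ℝ)) with hY
  have hbl : ∀ x ∈ [b], (0:ℝ) ≤ x := by intro x hx; simp at hx; subst hx; exact hb
  have hAnn : 0 ≤ ASeq [b] k := ASeq_nonneg hbl k
  have hBnn : 0 ≤ ASeq M.toList k := ASeq_nonneg hMl k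
  have hXnn : 0 ≤ X := by rw [hX, hA]; exact Real.rpow_nonneg hAnn _
  have hYnn : 0 ≤ Y := by rw [hY, hB]; exact Real.rpow_nonneg hBnn _
  have hk0 : k ≠ 0 := by omega
  rw [hL, ASeq_cons, bconv]
  have term : ∀ i ∈ range (k+1),
      (k.choose i : ℝ) * ((i.factorial : ℝ) * b ^ i) * ASeq M.toList (k - i)
        ≤ (k.choose i : ℝ) * (X ^ i * Y ^ (k-i)) := by
    intro i hi
    rw [Finset.mem_range] at hi
    have hik : i ≤ k := by omega
    have facteq : (i.factorial : ℝ) * b ^ i = ASeq [b] i := by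
      rw [ASeq, hpoly_singleton]
    have t1 : (i.factorial : ℝ) * b ^ i ≤ X ^ i := by
      rw [facteq, hX, hA]
      exact rpow_bound hAnn hk0 (ASeq_nonneg hbl i) (ASeq_lyapunov hbl hik)
    have t2 : ASeq M.toList (k-i) ≤ Y ^ (k-i) := by
      rw [hY, hB]
      exact rpow_bound hBnn hk0 (ASeq_nonneg hMl (k-i)) (ASeq_lyapunov hMl (by omega))
    have hc : (0:ℝ) ≤ (k.choose i : ℝ) := Nat.cast_nonneg _
    have h1 : (0:ℝ) ≤ (i.factorial : ℝ) * b ^ i := by positivity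
    calc (k.choose i : ℝ) * ((i.factorial : ℝ) * b ^ i) * ASeq M.toList (k - i)
        ≤ (k.choose i : ℝ) * ((i.factorial : ℝ) * b ^ i) * Y ^ (k-i) := by
          exact mul_le_mul_of_nonneg_left t2 (by positivity)
      _ ≤ (k.choose i : ℝ) * X ^ i * Y ^ (k-i) := by
          have : (k.choose i : ℝ) * ((i.factorial : ℝ) * b ^ i) ≤ (k.choose i : ℝ) * X ^ i :=
            mul_le_mul_of_nonneg_left t1 hc
          exact mul_le_mul_of_nonneg_right this (pow_nonneg hYnn _)
      _ = (k.choose i : ℝ) * (X ^ i * Y ^ (k-i)) := by ring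
  calc ∑ i ∈ range (k+1), (k.choose i : ℝ) * ((i.factorial : ℝ) * b ^ i) * ASeq M.toList (k - i)
      ≤ ∑ i ∈ range (k+1), (k.choose i : ℝ) * (X ^ i * Y ^ (k-i)) := Finset.sum_le_sum term
    _ = (X + Y) ^ k := by
        rw [add_pow]
        exact Finset.sum_congr rfl fun i _ => by ring
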